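/- For nonzero Laurent polynomials f, g in N variables over the valued field K and every γ ∈ Γ^N, the tropicalization of the product evaluated at γ equals the tropical product of the tropicalizations: T(fg)(γ) = Tf(γ) + Tg(γ). -/

import Mathlib

open Finset Pointwise

/-- The tropical dot product `α·γ = ∑ i, α i • γ i`. -/
noncomputable def tropDot {Γ : Type*} [AddCommGroup Γ] [LinearOrder Γ] [IsOrderedAddMonoid Γ] {N : ℕ}
    (α : Fin N → ℤ) (γ : Fin N → Γ) : Γ :=
  ∑ i, α i • γ i

/-- The tropicalization of a Laurent polynomial `f` (an element of the group algebra
`K[ℤ^N]`), evaluated at `γ ∈ Γ^N`:  `Tf(γ) = min_{α ∈ E(f)} (val φ_α + α·γ)`,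
computed in `Γ ∪ {∞}` (the min over the empty set is `∞`). -/
noncomputable def tropicalize {Γ : Type*} [AddCommGroup Γ] [LinearOrder Γ] [IsOrderedAddMonoid Γ]
    {K : Type*} [Field K] {N : ℕ} (val : K → WithTop Γ)
    (f : AddMonoidAlgebra K (Fin N → ℤ)) (γ : Fin N → Γ) : WithTop Γ :=
  f.coeff.support.inf fun α => val (f.coeff α) + WithTop.some (tropDot α γ)

/-- `D_γ(Tf)`: the set of exponents of `f` at which the minimum defining `Tf(γ)`
is attained. -/
def tropD {Γ : Type*} [AddCommGroup Γ] [LinearOrder Γ] [IsOrderedAddMonoid Γ] {K : Type*} [Field K] {N : ℕ}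
    (val : K → WithTop Γ) (f : AddMonoidAlgebra K (Fin N → ℤ))
    (γ : Fin N → Γ) : Set (Fin N → ℤ) :=
  {α | α ∈ f.coeff.support ∧ tropicalize val f γ = val (f.coeff α) + WithTop.some (tropDot α γ)}

/-- `V(Tf)`: the hypersurface associated to the tropicalization of `f`,
i.e. the points `γ` where the minimum is attained at least twice. -/
def tropV {Γ : Type*} [AddCommGroup Γ] [LinearOrder Γ] [IsOrderedAddMonoid Γ] {K : Type*} [Field K] {N : ℕ}
    (val : K → WithTop Γ) (f : AddMonoidAlgebra K (Fin N → ℤ)) :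
    Set (Fin N → Γ) :=
  {γ | ∃ α β : Fin N → ℤ, α ≠ β ∧ α ∈ tropD val f γ ∧ β ∈ tropD val f γ}

/-- Evaluation of a Laurent polynomial at a point of the torus `(K∖{0})^N`:
`f(x) = ∑_{α ∈ E(f)} φ_α x^α`. -/
noncomputable def lEval {K : Type*} [Field K] {N : ℕ}
    (f : AddMonoidAlgebra K (Fin N → ℤ)) (x : Fin N → Kˣ) : K :=
  ∑ α ∈ f.coeff.support, f.coeff α * ((∏ i, (x i) ^ (α i) : Kˣ) : K)



section
variable {Γ : Type*} [AddCommGroup Γ] [LinearOrder Γ] [IsOrderedAddMonoid Γ] {K : Type*} [Field K]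
  (val : K → WithTop Γ)
  (hval0 : ∀ x : K, val x = ⊤ ↔ x = 0)
  (hvalmul : ∀ x y : K, val (x * y) = val x + val y)
  (hvaladd : ∀ x y : K, min (val x) (val y) ≤ val (x + y))

include hval0 hvaladd in
lemma le_val_sum {ι : Type*} (s : Finset ι) (F : ι → K) (c d : WithTop Γ)
    (h : ∀ i ∈ s, c ≤ val (F i) + d) : c ≤ val (∑ i ∈ s, F i) + d := by
  induction s using Finset.cons_induction with
  | empty => simp [(hval0 0).mpr rfl]
  | cons a s ha ih =>
    rw [Finset.sum_cons]
    refine le_trans ?_ (add_le_add_left (hvaladd _ _) d)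
    rw [← min_add_add_right]
    exact le_min (h a (Finset.mem_cons_self a s))
      (ih fun i hi => h i (Finset.mem_cons_of_mem hi))

include hval0 hvaladd in
lemma lt_val_sum {ι : Type*} (s : Finset ι) (F : ι → K) (c : WithTop Γ) (hc : c ≠ ⊤)
    (h : ∀ i ∈ s, c < val (F i)) : c < val (∑ i ∈ s, F i) := by
  induction s using Finset.cons_induction with
  | empty => simpa [(hval0 0).mpr rfl] using lt_top_iff_ne_top.mpr hc
  | cons a s ha ih =>
    rw [Finset.sum_cons]
    refine lt_of_lt_of_le ?_ (hvaladd _ _)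
    exact lt_min (h a (Finset.mem_cons_self a s))
      (ih fun i hi => h i (Finset.mem_cons_of_mem hi))

include hval0 hvalmul in
lemma val_one' : val 1 = 0 := by
  have h1 : val 1 ≠ ⊤ := fun h => one_ne_zero ((hval0 1).mp h)
  obtain ⟨v, hv⟩ := WithTop.ne_top_iff_exists.mp h1
  have h2 := hvalmul 1 1
  rw [one_mul, ← hv, ← WithTop.coe_add] at h2
  have h3 : v = v + v := by exact_mod_cast h2
  have h4 : v = 0 := by
    have := add_eq_left (a := v) (b := v)
    exact this.mp h3.symm
  rw [← hv, h4]; rfl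

include hval0 hvalmul in
lemma val_neg' (x : K) : val (-x) = val x := by
  have hm : val (-1 : K) = 0 := by
    have h1 : val (-1 : K) ≠ ⊤ := fun h => by simpa using (hval0 (-1)).mp h
    obtain ⟨v, hv⟩ := WithTop.ne_top_iff_exists.mp h1
    have h2 := hvalmul (-1) (-1)
    rw [neg_mul_neg, one_mul, val_one' val hval0 hvalmul, ← hv, ← WithTop.coe_add] at h2
    have h3 : v + v = (0 : Γ) := by exact_mod_cast h2.symm
    have h4 : v = 0 := by
      by_contra hne
      rcases lt_or_gt_of_ne hne with h|h
      · exact absurd h3 (add_neg h h).ne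
      · exact absurd h3 (add_pos h h).ne'
    rw [← hv, h4]; rfl
  calc val (-x) = val ((-1) * x) := by rw [neg_one_mul]
  _ = val x := by rw [hvalmul, hm, zero_add]

include hval0 hvalmul hvaladd in
lemma val_add_eq_left (x y : K) (h : val x < val y) : val (x + y) = val x := by
  refine le_antisymm ?_ (by simpa [min_eq_left h.le] using hvaladd x y)
  by_contra hlt
  push_neg at hlt
  have key : min (val (x + y)) (val (-y)) ≤ val x := by
    have h5 := hvaladd (x + y) (-y)
    rwa [show x + y + -y = x by ring] at h5
  rw [val_neg' val hval0 hvalmul] at key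
  exact absurd key (not_le_of_gt (lt_min hlt h))
end

lemma tropDot_add {Γ : Type*} [AddCommGroup Γ] [LinearOrder Γ] [IsOrderedAddMonoid Γ] {N : ℕ}
    (α β : Fin N → ℤ) (γ : Fin N → Γ) :
    tropDot (α + β) γ = tropDot α γ + tropDot β γ := by
  simp [tropDot, add_smul, Finset.sum_add_distrib]

def LexZ (N : ℕ) : Type := Lex (Fin N → ℤ)
noncomputable instance (N : ℕ) : AddCommGroup (LexZ N) :=
  inferInstanceAs (AddCommGroup (Lex (Fin N → ℤ)))
noncomputable instance (N : ℕ) : LinearOrder (LexZ N) :=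
  inferInstanceAs (LinearOrder (Lex (Fin N → ℤ)))
instance (N : ℕ) : IsOrderedCancelAddMonoid (LexZ N) :=
  inferInstanceAs (IsOrderedCancelAddMonoid (Lex (Fin N → ℤ)))
def toLexZ {N : ℕ} (a : Fin N → ℤ) : LexZ N := toLex a


/-- The tropicalization of a product evaluates to the tropical product (i.e. the sum)
of the tropicalizations of the factors: `T(fg)(γ) = Tf(γ) + Tg(γ)`. -/
theorem tropicalize_mul {Γ : Type*} [AddCommGroup Γ] [LinearOrder Γ] [IsOrderedAddMonoid Γ]
    {K : Type*} [Field K] {N : ℕ}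
    (val : K → WithTop Γ)
    (hval0 : ∀ x : K, val x = ⊤ ↔ x = 0)
    (hvalmul : ∀ x y : K, val (x * y) = val x + val y)
    (hvaladd : ∀ x y : K, min (val x) (val y) ≤ val (x + y))
    (f g : AddMonoidAlgebra K (Fin N → ℤ)) (hf : f ≠ 0) (hg : g ≠ 0)
    (γ : Fin N → Γ) :
    tropicalize val (f * g) γ = tropicalize val f γ + tropicalize val g γ := by
  classical
  have htop : ∀ (h : AddMonoidAlgebra K (Fin N → ℤ)) a, a ∈ h.coeff.support → val (h.coeff a) ≠ ⊤ :=
    fun h a ha ht => Finsupp.mem_support_iff.mp ha ((hval0 _).mp ht)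
  set Tf := tropicalize val f γ with hTf
  set Tg := tropicalize val g γ with hTg
  -- minimizers
  obtain ⟨α₁, hα₁mem, hα₁⟩ := Finset.exists_mem_eq_inf f.coeff.support
    (Finsupp.support_nonempty_iff.mpr (AddMonoidAlgebra.coeff_eq_zero.not.mpr hf)) (fun α => val (f.coeff α) + WithTop.some (tropDot α γ))
  obtain ⟨β₁, hβ₁mem, hβ₁⟩ := Finset.exists_mem_eq_inf g.coeff.support
    (Finsupp.support_nonempty_iff.mpr (AddMonoidAlgebra.coeff_eq_zero.not.mpr hg)) (fun α => val (g.coeff α) + WithTop.some (tropDot α γ))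
  set Df := f.coeff.support.filter (fun a => Tf = val (f.coeff a) + WithTop.some (tropDot a γ)) with hDf
  set Dg := g.coeff.support.filter (fun a => Tg = val (g.coeff a) + WithTop.some (tropDot a γ)) with hDg
  obtain ⟨α₀, hα₀, hα₀min⟩ := Finset.exists_min_image Df toLexZ
    ⟨α₁, Finset.mem_filter.mpr ⟨hα₁mem, hα₁⟩⟩
  obtain ⟨β₀, hβ₀, hβ₀min⟩ := Finset.exists_min_image Dg toLexZ
    ⟨β₁, Finset.mem_filter.mpr ⟨hβ₁mem, hβ₁⟩⟩
  obtain ⟨hα₀s, hα₀eq⟩ := Finset.mem_filter.mp hα₀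
  obtain ⟨hβ₀s, hβ₀eq⟩ := Finset.mem_filter.mp hβ₀
  have hTf_ne : Tf ≠ ⊤ := by
    rw [hα₀eq]; exact WithTop.add_ne_top.mpr ⟨htop f α₀ hα₀s, WithTop.coe_ne_top⟩
  have hTg_ne : Tg ≠ ⊤ := by
    rw [hβ₀eq]; exact WithTop.add_ne_top.mpr ⟨htop g β₀ hβ₀s, WithTop.coe_ne_top⟩
  set x₀ : Fin N → ℤ := α₀ + β₀ with hx₀
  set c := val (f.coeff α₀) + val (g.coeff β₀) with hc
  have hcne : c ≠ ⊤ := WithTop.add_ne_top.mpr ⟨htop f α₀ hα₀s, htop g β₀ hβ₀s⟩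
  have hrearr : ∀ (a b : WithTop Γ) (s t : Γ),
      (a + WithTop.some s) + (b + WithTop.some t) = (a + b) + WithTop.some (s + t) := by
    intro a b s t
    rw [add_add_add_comm, WithTop.coe_add]
  have hTfTg : Tf + Tg = c + WithTop.some (tropDot x₀ γ) := by
    rw [hα₀eq, hβ₀eq, hrearr, ← tropDot_add]
  refine le_antisymm ?_ ?_
  · -- upper bound: trop (f*g) ≤ Tf + Tg
    have hval_x₀ : val ((f * g).coeff x₀) = c := by
      rw [AddMonoidAlgebra.mul_apply]
      simp only [Finsupp.sum]
      rw [← Finset.sum_product']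
      have hmem : (α₀, β₀) ∈ f.coeff.support ×ˢ g.coeff.support := Finset.mem_product.mpr ⟨hα₀s, hβ₀s⟩
      rw [← Finset.add_sum_erase _ _ hmem]
      rw [if_pos rfl]
      have hct : val (f.coeff α₀ * g.coeff β₀) = c := hvalmul _ _
      rw [← hct]
      apply val_add_eq_left val hval0 hvalmul hvaladd
      rw [hct]
      apply lt_val_sum val hval0 hvaladd _ _ c hcne
      rintro ⟨p₁, p₂⟩ hp
      have hpne : (p₁, p₂) ≠ (α₀, β₀) := Finset.ne_of_mem_erase hp
      have hpmem := Finset.mem_of_mem_erase hp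
      obtain ⟨hp₁, hp₂⟩ := Finset.mem_product.mp hpmem
      by_cases hpx : p₁ + p₂ = x₀
      · rw [if_pos hpx, hvalmul]
        have h1 : Tf ≤ val (f.coeff p₁) + WithTop.some (tropDot p₁ γ) := Finset.inf_le hp₁
        have h2 : Tg ≤ val (g.coeff p₂) + WithTop.some (tropDot p₂ γ) := Finset.inf_le hp₂
        have key : Tf + Tg < (val (f.coeff p₁) + WithTop.some (tropDot p₁ γ))
            + (val (g.coeff p₂) + WithTop.some (tropDot p₂ γ)) := by
          rcases eq_or_lt_of_le h1 with he1 | hl1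
          · rcases eq_or_lt_of_le h2 with he2 | hl2
            · -- both minimizers: lex contradiction
              exfalso
              have hm1 : toLexZ α₀ ≤ toLexZ p₁ :=
                hα₀min p₁ (Finset.mem_filter.mpr ⟨hp₁, he1⟩)
              have hm2 : toLexZ β₀ ≤ toLexZ p₂ :=
                hβ₀min p₂ (Finset.mem_filter.mpr ⟨hp₂, he2⟩)
              have hsum : toLexZ p₁ + toLexZ p₂ = toLexZ α₀ + toLexZ β₀ := by
                have h9 : p₁ + p₂ = α₀ + β₀ := hpx
                exact congrArg toLexZ h9
              rcases eq_or_lt_of_le hm1 with he | hlt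
              · have hp1 : p₁ = α₀ := he.symm
                have hp2 : p₂ = β₀ := by
                  have := hpx
                  rw [hp1, hx₀] at this
                  exact add_left_cancel this
                exact hpne (by rw [hp1, hp2])
              · have : toLexZ α₀ + toLexZ β₀ < toLexZ p₁ + toLexZ p₂ :=
                  add_lt_add_of_lt_of_le hlt hm2
                rw [hsum] at this
                exact lt_irrefl _ this
            · exact WithTop.add_lt_add_of_le_of_lt hTf_ne h1 hl2
          · exact WithTop.add_lt_add_of_lt_of_le hTg_ne hl1 h2
        rw [hTfTg, hrearr, ← tropDot_add, hpx] at key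
        exact lt_of_add_lt_add_right key
      · rw [if_neg hpx, (hval0 0).mpr rfl]
        exact lt_top_iff_ne_top.mpr hcne
    have hx₀mem : x₀ ∈ (f * g).coeff.support := by
      rw [Finsupp.mem_support_iff]
      intro h0
      rw [h0] at hval_x₀
      exact hcne (((hval0 0).mpr rfl ▸ hval_x₀.symm))
    calc tropicalize val (f * g) γ ≤ val ((f * g).coeff x₀) + WithTop.some (tropDot x₀ γ) :=
          Finset.inf_le hx₀mem
    _ = Tf + Tg := by rw [hval_x₀, hTfTg]
  · -- lower bound
    apply Finset.le_inf
    intro x hx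
    rw [AddMonoidAlgebra.mul_apply]
    simp only [Finsupp.sum]
    rw [← Finset.sum_product']
    apply le_val_sum val hval0 hvaladd
    rintro ⟨p₁, p₂⟩ hpmem
    obtain ⟨hp₁, hp₂⟩ := Finset.mem_product.mp hpmem
    by_cases hpx : p₁ + p₂ = x
    · rw [if_pos hpx, hvalmul]
      have h1 : Tf ≤ val (f.coeff p₁) + WithTop.some (tropDot p₁ γ) := Finset.inf_le hp₁
      have h2 : Tg ≤ val (g.coeff p₂) + WithTop.some (tropDot p₂ γ) := Finset.inf_le hp₂
      calc Tf + Tg ≤ (val (f.coeff p₁) + WithTop.some (tropDot p₁ γ))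
            + (val (g.coeff p₂) + WithTop.some (tropDot p₂ γ)) := add_le_add h1 h2
      _ = val (f.coeff p₁) + val (g.coeff p₂) + WithTop.some (tropDot x γ) := by
            rw [hrearr, ← tropDot_add, hpx]
    · rw [if_neg hpx, (hval0 0).mpr rfl]
      simp
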